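/- Let 0 < α < 1, ν = ν_α = (1−α)/(2−α), μ > 0 and set r = 2μ/(2−α). Then ∫₀¹ θ₊(x)² dx = (1/(2−α)) (1/r²) [ (r J_ν(r))² + (r J_{ν+1}(r))² − 2ν r J_ν(r) J_{ν+1}(r) ]. -/

import Mathlib

open MeasureTheory intervalIntegral Filter

/-- The Bessel function of the first kind of real order `ν`. -/
noncomputable def besselJ (ν y : ℝ) : ℝ :=
  ∑' m : ℕ, ((-1) ^ m / (m.factorial * Real.Gamma (m + ν + 1))) *
    (y / 2) ^ (2 * (m : ℝ) + ν)

/-- The function `θ₊(x) = x^{(1-α)/2} J_{ν_α}((2/(2-α)) μ x^{(2-α)/2})`,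
where `ν_α = (1-α)/(2-α)`. -/
noncomputable def thetaP (α μ x : ℝ) : ℝ :=
  x ^ ((1 - α) / 2) * besselJ ((1 - α) / (2 - α)) (2 / (2 - α) * μ * x ^ ((2 - α) / 2))

/-- The `L²(0,1)` norm of `θ₊`: with `ν = (1-α)/(2-α)` and `r = 2μ/(2-α)`,
`∫₀¹ θ₊(x)² dx = (1/(2-α)) (1/r²) [(r J_ν(r))² + (r J_{ν+1}(r))² - 2ν r J_ν(r) J_{ν+1}(r)]`. -/
noncomputable def aCoef (ν : ℝ) (m : ℕ) : ℝ :=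
  (-1) ^ m / (m.factorial * Real.Gamma (m + ν + 1) * (2:ℝ) ^ (2 * (m:ℝ) + ν))

lemma gamma_arg_pos {ν : ℝ} (hν : -1 < ν) (m : ℕ) : (0:ℝ) < (m:ℝ) + ν + 1 := by
  have : (0:ℝ) ≤ (m:ℝ) := Nat.cast_nonneg m
  linarith

lemma aCoef_denom_pos {ν : ℝ} (hν : -1 < ν) (m : ℕ) :
    (0:ℝ) < m.factorial * Real.Gamma (m + ν + 1) * (2:ℝ) ^ (2 * (m:ℝ) + ν) := by
  have h1 : (0:ℝ) < m.factorial := by exact_mod_cast m.factorial_pos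
  have h2 : (0:ℝ) < Real.Gamma ((m:ℝ) + ν + 1) := Real.Gamma_pos_of_pos (gamma_arg_pos hν m)
  have h3 : (0:ℝ) < (2:ℝ) ^ (2 * (m:ℝ) + ν) := Real.rpow_pos_of_pos (by norm_num) _
  positivity

lemma aCoef_ne_zero {ν : ℝ} (hν : -1 < ν) (m : ℕ) : aCoef ν m ≠ 0 := by
  unfold aCoef
  have := aCoef_denom_pos hν m
  have h4 : ((-1:ℝ)) ^ m ≠ 0 := by
    simp [pow_ne_zero]
  exact div_ne_zero h4 (ne_of_gt this)

lemma aCoef_succ {ν : ℝ} (hν : -1 < ν) (m : ℕ) :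
    aCoef ν (m+1) = aCoef ν m * (-1 / (4 * ((m:ℝ)+1) * ((m:ℝ) + ν + 1))) := by
  have hpos := gamma_arg_pos hν m
  unfold aCoef
  have hG : Real.Gamma (((m:ℕ)+1 : ℕ) + ν + 1) = ((m:ℝ) + ν + 1) * Real.Gamma ((m:ℝ) + ν + 1) := by
    push_cast
    rw [show (m:ℝ) + 1 + ν + 1 = ((m:ℝ) + ν + 1) + 1 by ring, Real.Gamma_add_one (ne_of_gt hpos)]
  have hP : (2:ℝ) ^ (2 * (((m:ℕ)+1 : ℕ):ℝ) + ν) = 4 * (2:ℝ) ^ (2 * (m:ℝ) + ν) := by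
    push_cast
    rw [show 2 * ((m:ℝ) + 1) + ν = (2 * (m:ℝ) + ν) + 2 by ring, Real.rpow_add (by norm_num)]
    norm_num
    ring
  have hF : (((m+1).factorial : ℝ)) = ((m:ℝ)+1) * m.factorial := by
    rw [Nat.factorial_succ]; push_cast; ring
  rw [hG, hP, hF]
  have h2 : (0:ℝ) < (2:ℝ) ^ (2 * (m:ℝ) + ν) := Real.rpow_pos_of_pos (by norm_num) _
  have h1 : (0:ℝ) < m.factorial := by exact_mod_cast m.factorial_pos
  have h3 : (0:ℝ) < Real.Gamma ((m:ℝ) + ν + 1) := Real.Gamma_pos_of_pos hpos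
  have hmp : (0:ℝ) < (m:ℝ) + 1 := by positivity
  field_simp
  ring

noncomputable def gFun (ν u : ℝ) : ℝ := ∑' m : ℕ, aCoef ν m * u ^ m

lemma ratio_le {ν : ℝ} (hν : -1 < ν) {u : ℝ} {m N : ℕ} (hN : |u| ≤ N) (hm : N ≤ m) :
    |(-1 / (4 * ((m:ℝ)+1) * ((m:ℝ) + ν + 1)))| * |u| ≤ 1/2 := by
  have hpos := gamma_arg_pos hν m
  have hm' : (N:ℝ) ≤ (m:ℝ) := by exact_mod_cast hm
  have h1 : (0:ℝ) < 4 * ((m:ℝ)+1) * ((m:ℝ)+ν+1) := by positivity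
  rw [abs_div, abs_neg, abs_one, abs_of_pos h1]
  rw [div_mul_eq_mul_div, one_mul, div_le_iff₀ h1]
  have hu : |u| ≤ (m:ℝ) + 1 := by linarith
  have h0u : 0 ≤ |u| := abs_nonneg u
  nlinarith [mul_le_mul_of_nonneg_left hu h0u]

lemma summable_aCoef {ν : ℝ} (hν : -1 < ν) (u : ℝ) :
    Summable (fun m : ℕ => aCoef ν m * u ^ m) := by
  obtain ⟨N, hN⟩ := exists_nat_ge |u|
  apply summable_of_ratio_norm_eventually_le (r := 1/2) (by norm_num)
  filter_upwards [eventually_ge_atTop N] with m hm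
  rw [Real.norm_eq_abs, Real.norm_eq_abs, pow_succ, aCoef_succ hν m, ← mul_assoc,
    mul_comm (aCoef ν m) _, mul_assoc, abs_mul]
  have key := ratio_le hν hN hm
  have h3 : |-1 / (4 * ((m:ℝ) + 1) * ((m:ℝ) + ν + 1)) * aCoef ν m| * |u ^ m * u|
      = (|-1 / (4 * ((m:ℝ) + 1) * ((m:ℝ) + ν + 1))| * |u|) * (|aCoef ν m| * |u ^ m|) := by
    rw [abs_mul, abs_mul]; ring
  rw [h3, show |aCoef ν m * u ^ m| = |aCoef ν m| * |u ^ m| from abs_mul _ _]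
  exact mul_le_mul_of_nonneg_right key (by positivity)

lemma aCoef_shift {ν : ℝ} (hν : -1 < ν) (m : ℕ) :
    ((m:ℝ)+1) * aCoef ν (m+1) = -(1/2) * aCoef (ν+1) m := by
  have hpos := gamma_arg_pos hν m
  unfold aCoef
  have hG : Real.Gamma (((m:ℕ)+1 : ℕ) + ν + 1) = Real.Gamma ((m:ℝ) + (ν+1) + 1) := by
    push_cast; ring_nf
  have hP : (2:ℝ) ^ (2 * (((m:ℕ)+1 : ℕ):ℝ) + ν) = 2 * (2:ℝ) ^ (2 * (m:ℝ) + (ν+1)) := by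
    push_cast
    rw [show 2 * ((m:ℝ) + 1) + ν = (2 * (m:ℝ) + (ν+1)) + 1 by ring, Real.rpow_add (by norm_num)]
    norm_num
    ring
  have hF : (((m+1).factorial : ℝ)) = ((m:ℝ)+1) * m.factorial := by
    rw [Nat.factorial_succ]; push_cast; ring
  rw [hG, hP, hF]
  have h2 : (0:ℝ) < (2:ℝ) ^ (2 * (m:ℝ) + (ν+1)) := Real.rpow_pos_of_pos (by norm_num) _
  have h1 : (0:ℝ) < m.factorial := by exact_mod_cast m.factorial_pos
  have h3 : (0:ℝ) < Real.Gamma ((m:ℝ) + (ν+1) + 1) :=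
    Real.Gamma_pos_of_pos (gamma_arg_pos (by linarith) m)
  have hmp : (0:ℝ) < (m:ℝ) + 1 := by positivity
  rw [pow_succ]
  field_simp

lemma aCoef_rec2 {ν : ℝ} (hν : -1 < ν) (m : ℕ) :
    aCoef ν m = 2 * ((m:ℝ) + ν + 1) * aCoef (ν+1) m := by
  have hpos := gamma_arg_pos hν m
  unfold aCoef
  have hG : Real.Gamma ((m:ℝ) + (ν+1) + 1) = ((m:ℝ) + ν + 1) * Real.Gamma ((m:ℝ) + ν + 1) := by
    rw [show (m:ℝ) + (ν+1) + 1 = ((m:ℝ) + ν + 1) + 1 by ring, Real.Gamma_add_one (ne_of_gt hpos)]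
  have hP : (2:ℝ) ^ (2 * (m:ℝ) + (ν+1)) = 2 * (2:ℝ) ^ (2 * (m:ℝ) + ν) := by
    rw [show 2 * (m:ℝ) + (ν+1) = (2 * (m:ℝ) + ν) + 1 by ring, Real.rpow_add (by norm_num)]
    norm_num
    ring
  rw [hG, hP]
  have h2 : (0:ℝ) < (2:ℝ) ^ (2 * (m:ℝ) + ν) := Real.rpow_pos_of_pos (by norm_num) _
  have h1 : (0:ℝ) < m.factorial := by exact_mod_cast m.factorial_pos
  have h3 : (0:ℝ) < Real.Gamma ((m:ℝ) + ν + 1) := Real.Gamma_pos_of_pos hpos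
  field_simp

lemma summable_m_aCoef {ν : ℝ} (hν : -1 < ν) (u : ℝ) :
    Summable (fun m : ℕ => (m:ℝ) * aCoef ν m * u ^ m) := by
  obtain ⟨N0, hN0⟩ := exists_nat_ge |u|
  set N := N0 + 1 with hNdef
  have hN : |u| ≤ (N:ℝ) := by rw [hNdef]; push_cast; linarith
  apply summable_of_ratio_norm_eventually_le (r := 1/2) (by norm_num)
  filter_upwards [eventually_ge_atTop N] with m hm
  have hm1 : 1 ≤ m := le_trans (by omega) hm
  have hmR : (N:ℝ) ≤ (m:ℝ) := by exact_mod_cast hm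
  have hm1R : (1:ℝ) ≤ (m:ℝ) := by exact_mod_cast hm1
  have hpos := gamma_arg_pos hν m
  rw [Real.norm_eq_abs, Real.norm_eq_abs, pow_succ, aCoef_succ hν m]
  push_cast
  have e1 : ((m:ℝ) + 1) * (aCoef ν m * (-1 / (4 * ((m:ℝ) + 1) * ((m:ℝ) + ν + 1)))) * (u ^ m * u)
      = (aCoef ν m * u ^ m) * (-(u / (4 * ((m:ℝ) + ν + 1)))) := by
    field_simp
  rw [e1, abs_mul]
  have key : |(-(u / (4 * ((m:ℝ) + ν + 1))))| ≤ (m:ℝ) / 2 := by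
    rw [abs_neg, abs_div, abs_of_pos (by positivity : (0:ℝ) < 4 * ((m:ℝ) + ν + 1))]
    rw [div_le_div_iff₀ (by positivity) (by norm_num)]
    have h1 : (1:ℝ) ≤ (m:ℝ) + ν + 1 := by linarith
    nlinarith [abs_nonneg u]
  calc |aCoef ν m * u ^ m| * |(-(u / (4 * ((m:ℝ) + ν + 1))))|
      ≤ |aCoef ν m * u ^ m| * ((m:ℝ)/2) := mul_le_mul_of_nonneg_left key (abs_nonneg _)
    _ = 1/2 * |(m:ℝ) * (aCoef ν m * u ^ m)| := by
        simp only [abs_mul, Nat.abs_cast]; ring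
    _ = 1/2 * |(m:ℝ) * aCoef ν m * u ^ m| := by rw [mul_assoc]

lemma deriv_bound {ν : ℝ} (m : ℕ) {y R : ℝ} (hR1 : 1 ≤ R) (hy : |y| ≤ R) :
    ‖aCoef ν m * ((m:ℝ) * y ^ (m-1))‖ ≤ |(m:ℝ) * aCoef ν m * R ^ m| := by
  have hR0 : (0:ℝ) ≤ R := by linarith
  simp only [Real.norm_eq_abs, abs_mul, abs_pow, Nat.abs_cast]
  rw [abs_of_nonneg hR0]
  have h1 : |y| ^ (m-1) ≤ R ^ (m-1) := pow_le_pow_left₀ (abs_nonneg y) hy _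
  have h2 : R ^ (m-1) ≤ R ^ m := pow_le_pow_right₀ hR1 (Nat.sub_le m 1)
  calc |aCoef ν m| * ((m:ℝ) * |y| ^ (m-1)) ≤ |aCoef ν m| * ((m:ℝ) * R ^ m) := by
        apply mul_le_mul_of_nonneg_left _ (abs_nonneg _)
        apply mul_le_mul_of_nonneg_left _ (Nat.cast_nonneg m)
        linarith
    _ = (m:ℝ) * |aCoef ν m| * R ^ m := by ring

lemma hasDerivAt_gFun {ν : ℝ} (hν : -1 < ν) (u : ℝ) :
    HasDerivAt (gFun ν) (-(1/2) * gFun (ν+1) u) u := by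
  set R := |u| + 1 with hRdef
  have hR1 : (1:ℝ) ≤ R := by have := abs_nonneg u; simp only [hRdef]; linarith
  have hmem : u ∈ Metric.ball (0:ℝ) R := by
    simp [Metric.mem_ball, Real.dist_eq, hRdef]
  have h0mem : (0:ℝ) ∈ Metric.ball (0:ℝ) R := by
    simp [Metric.mem_ball]; linarith
  have hder : HasDerivAt (fun z => ∑' m : ℕ, aCoef ν m * z ^ m)
      (∑' m : ℕ, aCoef ν m * ((m:ℝ) * u ^ (m-1))) u := by
    apply hasDerivAt_tsum_of_isPreconnected
      (u := fun m : ℕ => |(m:ℝ) * aCoef ν m * R ^ m|)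
      ((summable_m_aCoef hν R).abs) Metric.isOpen_ball
      (convex_ball (0:ℝ) R).isPreconnected
      (fun m y _ => (hasDerivAt_pow m y).const_mul (aCoef ν m))
      (fun m y hy => deriv_bound m hR1 (by
        rw [Metric.mem_ball, Real.dist_eq, sub_zero] at hy; linarith))
      h0mem (summable_aCoef hν 0) hmem
  have hs : Summable (fun m : ℕ => aCoef ν m * ((m:ℝ) * u ^ (m-1))) := by
    apply Summable.of_norm_bounded ((summable_m_aCoef hν R).abs)
    intro m
    exact deriv_bound m hR1 (by simp [hRdef])
  have heq : ∑' m : ℕ, aCoef ν m * ((m:ℝ) * u ^ (m-1)) = -(1/2) * gFun (ν+1) u := by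
    rw [hs.tsum_eq_zero_add]
    simp only [Nat.cast_zero, zero_mul, mul_zero, zero_add]
    rw [gFun, ← tsum_mul_left]
    congr 1; funext m
    have h := aCoef_shift hν m
    push_cast
    linear_combination u ^ m * h
  exact heq ▸ hder

lemma gFun_identity {ν : ℝ} (hν : -1 < ν) (u : ℝ) :
    gFun ν u = 2 * (ν+1) * gFun (ν+1) u - u * gFun (ν+2) u := by
  have hν1 : (-1:ℝ) < ν + 1 := by linarith
  have s1 : Summable (fun m : ℕ => 2 * (ν+1) * (aCoef (ν+1) m * u ^ m)) :=
    (summable_aCoef hν1 u).mul_left _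
  have s2 : Summable (fun m : ℕ => 2 * ((m:ℝ) * aCoef (ν+1) m * u ^ m)) :=
    (summable_m_aCoef hν1 u).mul_left _
  have hterm : ∀ m : ℕ, aCoef ν m * u ^ m
      = 2 * (ν+1) * (aCoef (ν+1) m * u ^ m) + 2 * ((m:ℝ) * aCoef (ν+1) m * u ^ m) := by
    intro m
    have h := aCoef_rec2 hν m
    linear_combination u ^ m * h
  rw [gFun, tsum_congr hterm, s1.tsum_add s2, tsum_mul_left, tsum_mul_left]
  have hshift : ∑' m : ℕ, (m:ℝ) * aCoef (ν+1) m * u ^ m = -(u/2) * gFun (ν+2) u := by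
    have hs : Summable (fun m : ℕ => (m:ℝ) * aCoef (ν+1) m * u ^ m) :=
      summable_m_aCoef hν1 u
    rw [hs.tsum_eq_zero_add]
    simp only [Nat.cast_zero, zero_mul, zero_add]
    rw [gFun, ← tsum_mul_left, show ν + (2:ℝ) = ν + 1 + 1 by ring]
    congr 1; funext m
    have h := aCoef_shift hν1 m
    push_cast
    rw [pow_succ]
    linear_combination u ^ m * u * h
  rw [hshift, ← gFun]
  ring

lemma besselJ_eq {ν : ℝ} (hν : -1 < ν) {y : ℝ} (hy : 0 < y) :
    besselJ ν y = y ^ ν * gFun ν (y^2) := by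
  unfold besselJ gFun
  rw [← tsum_mul_left]
  congr 1; funext m
  have h1 : (y/2) ^ (2*(m:ℝ)+ν) = y ^ (2*(m:ℝ)+ν) / 2 ^ (2*(m:ℝ)+ν) :=
    Real.div_rpow hy.le (by norm_num) _
  have h2 : y ^ (2*(m:ℝ)+ν) = (y^2)^m * y ^ ν := by
    rw [Real.rpow_add hy]
    congr 1
    rw [show (2*(m:ℝ)) = ((2*m : ℕ):ℝ) by push_cast; ring, Real.rpow_natCast, pow_mul]
  rw [h1, h2]
  unfold aCoef
  have hd := aCoef_denom_pos hν m
  have h3 : (0:ℝ) < m.factorial := by exact_mod_cast m.factorial_pos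
  have h4 : (0:ℝ) < Real.Gamma ((m:ℝ) + ν + 1) := Real.Gamma_pos_of_pos (gamma_arg_pos hν m)
  have h5 : (0:ℝ) < (2:ℝ) ^ (2 * (m:ℝ) + ν) := Real.rpow_pos_of_pos (by norm_num) _
  field_simp

lemma besselJ_eventuallyEq {ν : ℝ} (hν : -1 < ν) {y : ℝ} (hy : 0 < y) :
    besselJ ν =ᶠ[nhds y] fun z => z ^ ν * gFun ν (z^2) := by
  filter_upwards [IsOpen.mem_nhds isOpen_Ioi (Set.mem_Ioi.2 hy)] with z hz
  exact besselJ_eq hν (Set.mem_Ioi.1 hz)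

lemma hasDerivAt_aux {ν : ℝ} (hν : -1 < ν) {y : ℝ} (hy : 0 < y) :
    HasDerivAt (besselJ ν)
      (ν * y ^ (ν-1) * gFun ν (y^2) + y ^ ν * (-(1/2) * gFun (ν+1) (y^2) * (2 * y^1))) y := by
  have h1 : HasDerivAt (fun z : ℝ => z ^ ν) (ν * y ^ (ν-1)) y := by
    simpa using Real.hasDerivAt_rpow_const (p := ν) (Or.inl hy.ne')
  have h2 : HasDerivAt (fun z : ℝ => gFun ν (z^2)) (-(1/2) * gFun (ν+1) (y^2) * (2 * y^1)) y :=
    by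
    have := (hasDerivAt_gFun hν (y^2)).comp y (hasDerivAt_pow 2 y)
    rw [show (2:ℝ) * y ^ 1 = ((2:ℕ):ℝ) * y ^ (2 - 1) by norm_num]
    exact this
  have h3 := (h1.mul h2).congr_of_eventuallyEq (besselJ_eventuallyEq hν hy)
  exact h3

lemma hasDerivAt_besselJ {ν : ℝ} (hν : -1 < ν) {y : ℝ} (hy : 0 < y) :
    HasDerivAt (besselJ ν) (ν / y * besselJ ν y - besselJ (ν+1) y) y := by
  have h3 := hasDerivAt_aux hν hy
  suffices hgoal : ν / y * besselJ ν y - besselJ (ν+1) y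
      = ν * y ^ (ν-1) * gFun ν (y^2) + y ^ ν * (-(1/2) * gFun (ν+1) (y^2) * (2 * y^1)) by
    rw [hgoal]; exact h3
  rw [besselJ_eq hν hy, besselJ_eq (by linarith : (-1:ℝ) < ν + 1) hy]
  have e1 : y ^ (ν-1) = y ^ ν / y := by
    rw [Real.rpow_sub hy, Real.rpow_one]
  have e2 : y ^ (ν+1) = y ^ ν * y := by
    rw [Real.rpow_add hy, Real.rpow_one]
  rw [e1, e2, pow_one]
  field_simp
  ring

lemma hasDerivAt_besselJ_succ {ν : ℝ} (hν : -1 < ν) {y : ℝ} (hy : 0 < y) :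
    HasDerivAt (besselJ (ν+1)) (besselJ ν y - (ν+1) / y * besselJ (ν+1) y) y := by
  have h3 := hasDerivAt_aux (by linarith : (-1:ℝ) < ν + 1) hy
  suffices hgoal : besselJ ν y - (ν+1) / y * besselJ (ν+1) y
      = (ν+1) * y ^ (ν+1-1) * gFun (ν+1) (y^2) + y ^ (ν+1) * (-(1/2) * gFun (ν+1+1) (y^2) * (2 * y^1)) by
    rw [hgoal]; exact h3
  rw [besselJ_eq hν hy, besselJ_eq (by linarith : (-1:ℝ) < ν + 1) hy]
  rw [gFun_identity hν (y^2)]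
  have e1 : y ^ (ν+1-1) = y ^ ν := by norm_num
  have e2 : y ^ (ν+1) = y ^ ν * y := by
    rw [Real.rpow_add hy, Real.rpow_one]
  rw [e1, e2, pow_one, show ν + 1 + 1 = ν + 2 by ring]
  field_simp
  ring

noncomputable def Fanti (ν r t : ℝ) : ℝ :=
  t^2/2 * ((besselJ ν (r*t))^2 + (besselJ (ν+1) (r*t))^2)
    - ν * t / r * (besselJ ν (r*t) * besselJ (ν+1) (r*t))

lemma hasDerivAt_Fanti {ν r : ℝ} (hν : -1 < ν) (hr : 0 < r) {t : ℝ} (ht : 0 < t) :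
    HasDerivAt (Fanti ν r) (t * (besselJ ν (r*t))^2) t := by
  have hrt : 0 < r * t := mul_pos hr ht
  have hlin : HasDerivAt (fun s : ℝ => r * s) r t := by
    simpa using (hasDerivAt_id t).const_mul r
  have hA : HasDerivAt (fun s : ℝ => besselJ ν (r*s))
      ((ν / (r*t) * besselJ ν (r*t) - besselJ (ν+1) (r*t)) * r) t := by
    have := (hasDerivAt_besselJ hν hrt).comp t hlin
    exact this
  have hB : HasDerivAt (fun s : ℝ => besselJ (ν+1) (r*s))
      ((besselJ ν (r*t) - (ν+1) / (r*t) * besselJ (ν+1) (r*t)) * r) t := by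
    have := (hasDerivAt_besselJ_succ hν hrt).comp t hlin
    exact this
  set A := besselJ ν (r*t) with hAdef
  set B := besselJ (ν+1) (r*t) with hBdef
  set A' := (ν / (r*t) * A - B) * r with hA'def
  set B' := (A - (ν+1) / (r*t) * B) * r with hB'def
  have h1 : HasDerivAt (fun s : ℝ => s^2/2) ((2:ℕ) * t^1 / 2) t :=
    (hasDerivAt_pow 2 t).div_const 2
  have h2 : HasDerivAt (fun s : ℝ => (besselJ ν (r*s))^2 + (besselJ (ν+1) (r*s))^2)
      ((2:ℕ) * A^1 * A' + (2:ℕ) * B^1 * B') t := (hA.pow 2).add (hB.pow 2)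
  have h3 : HasDerivAt (fun s : ℝ => s^2/2 * ((besselJ ν (r*s))^2 + (besselJ (ν+1) (r*s))^2))
      (((2:ℕ) * t^1 / 2) * (A^2 + B^2) + t^2/2 * ((2:ℕ) * A^1 * A' + (2:ℕ) * B^1 * B')) t :=
    h1.mul h2
  have h4 : HasDerivAt (fun s : ℝ => ν * s / r) (ν / r) t := by
    have : HasDerivAt (fun s : ℝ => ν * s) ν t := by simpa using (hasDerivAt_id t).const_mul ν
    simpa using this.div_const r
  have h5 : HasDerivAt (fun s : ℝ => ν * s / r * (besselJ ν (r*s) * besselJ (ν+1) (r*s)))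
      ((ν / r) * (A * B) + (ν * t / r) * (A' * B + A * B')) t := h4.mul (hA.mul hB)
  have h6 := h3.sub h5
  have heq : ((2:ℕ) * t^1 / 2) * (A^2 + B^2) + t^2/2 * ((2:ℕ) * A^1 * A' + (2:ℕ) * B^1 * B')
      - ((ν / r) * (A * B) + (ν * t / r) * (A' * B + A * B')) = t * A^2 := by
    rw [hA'def, hB'def]
    have hrne : r ≠ 0 := hr.ne'
    have htne : t ≠ 0 := ht.ne'
    field_simp
    ring
  rw [heq] at h6
  exact h6

lemma gFun_continuous {ν : ℝ} (hν : -1 < ν) : Continuous (gFun ν) := by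
  rw [continuous_iff_continuousAt]
  exact fun u => (hasDerivAt_gFun hν u).continuousAt

lemma besselJ_zero {ν : ℝ} (hν : 0 < ν) : besselJ ν 0 = 0 := by
  unfold besselJ
  have h : ∀ m : ℕ, ((-1:ℝ)) ^ m / (m.factorial * Real.Gamma (m + ν + 1)) *
      ((0:ℝ)/2) ^ (2*(m:ℝ)+ν) = 0 := by
    intro m
    rw [zero_div, Real.zero_rpow (by positivity), mul_zero]
  simp only [h]
  exact tsum_zero

lemma besselJ_continuousOn {ν : ℝ} (hν : 0 < ν) :
    ContinuousOn (besselJ ν) (Set.Ici 0) := by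
  intro y hy
  rcases eq_or_lt_of_le (Set.mem_Ici.1 hy) with h0 | h0
  · have hcont : ContinuousWithinAt (fun z : ℝ => z ^ ν * gFun ν (z^2)) (Set.Ici 0) y := by
      apply ContinuousWithinAt.mul
      · exact (Real.continuousAt_rpow_const y ν (Or.inr hν.le)).continuousWithinAt
      · exact ((gFun_continuous (by linarith)).comp (continuous_pow 2)).continuousAt.continuousWithinAt
    apply hcont.congr
    · intro z hz
      rcases eq_or_lt_of_le (Set.mem_Ici.1 hz) with hz0 | hz0
      · rw [← hz0, besselJ_zero hν, Real.zero_rpow hν.ne', zero_mul]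
      · exact besselJ_eq (by linarith) hz0
    · rw [← h0, besselJ_zero hν, Real.zero_rpow hν.ne', zero_mul]
  · exact (hasDerivAt_besselJ (by linarith) h0).continuousAt.continuousWithinAt

lemma rpow_const_continuous {p : ℝ} (hp : 0 < p) : Continuous (fun x : ℝ => x ^ p) := by
  rw [continuous_iff_continuousAt]
  exact fun x => Real.continuousAt_rpow_const x p (Or.inr hp.le)


theorem stmt9 (α μ : ℝ) (hα0 : 0 < α) (hα1 : α < 1) (hμ : 0 < μ) :
    ∫ x in (0:ℝ)..1, (thetaP α μ x) ^ 2
      = (1 / (2 - α)) * (1 / (2 * μ / (2 - α)) ^ 2) *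
        (((2 * μ / (2 - α)) * besselJ ((1 - α) / (2 - α)) (2 * μ / (2 - α))) ^ 2
          + ((2 * μ / (2 - α)) * besselJ ((1 - α) / (2 - α) + 1) (2 * μ / (2 - α))) ^ 2
          - 2 * ((1 - α) / (2 - α)) * (2 * μ / (2 - α))
              * besselJ ((1 - α) / (2 - α)) (2 * μ / (2 - α))
              * besselJ ((1 - α) / (2 - α) + 1) (2 * μ / (2 - α))) := by
  have hq0 : (0:ℝ) < 2 - α := by linarith
  set q : ℝ := 2 - α with hqdef
  set ν : ℝ := (1 - α) / q with hνdef
  set r : ℝ := 2 * μ / q with hrdef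
  have hν0 : 0 < ν := div_pos (by linarith) hq0
  have hν1 : (-1:ℝ) < ν := by linarith
  have hνh : ν < 1 := by
    rw [hνdef, div_lt_one hq0]; linarith
  have hr0 : 0 < r := div_pos (by linarith) hq0
  have hc : 2 / q * μ = r := by rw [hrdef]; ring
  -- the antiderivative
  set G : ℝ → ℝ := fun x => 2/q * Fanti ν r (x ^ (q/2)) with hGdef
  -- continuity facts
  have hrpow : Continuous (fun x : ℝ => x ^ (q/2)) := rpow_const_continuous (by linarith)
  have hmaps : Set.MapsTo (fun x : ℝ => r * x ^ (q/2)) (Set.Icc 0 1) (Set.Ici 0) := by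
    intro x hx
    exact Set.mem_Ici.2 (mul_nonneg hr0.le (Real.rpow_nonneg hx.1 _))
  have hbesA : ContinuousOn (fun x : ℝ => besselJ ν (r * x ^ (q/2))) (Set.Icc 0 1) :=
    (besselJ_continuousOn hν0).comp ((continuous_const.mul hrpow).continuousOn) hmaps
  have hbesB : ContinuousOn (fun x : ℝ => besselJ (ν+1) (r * x ^ (q/2))) (Set.Icc 0 1) :=
    (besselJ_continuousOn (by linarith)).comp ((continuous_const.mul hrpow).continuousOn) hmaps
  have hGcont : ContinuousOn G (Set.Icc 0 1) := by
    rw [hGdef]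
    apply ContinuousOn.mul continuousOn_const
    unfold Fanti
    apply ContinuousOn.sub
    · exact (((hrpow.pow 2).continuousOn.div_const 2).mul
        ((hbesA.pow 2).add (hbesB.pow 2)))
    · exact ((((continuous_const.mul hrpow).continuousOn).div_const r).mul (hbesA.mul hbesB))
  have hthetaP : ∀ x : ℝ, thetaP α μ x = x ^ ((1-α)/2) * besselJ ν (r * x ^ (q/2)) := by
    intro x
    rw [thetaP, ← hqdef, ← hνdef, hc]
  have hintg : ContinuousOn (fun x => (thetaP α μ x)^2) (Set.Icc 0 1) := by
    have h1 : ContinuousOn (fun x : ℝ => x ^ ((1-α)/2) * besselJ ν (r * x ^ (q/2)))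
        (Set.Icc 0 1) :=
      ((rpow_const_continuous (by linarith)).continuousOn.mul hbesA)
    have h2 : ContinuousOn (thetaP α μ) (Set.Icc 0 1) := h1.congr (fun x _ => hthetaP x)
    exact h2.pow 2
  have hInt : IntervalIntegrable (fun x => (thetaP α μ x)^2) MeasureTheory.volume 0 1 := by
    apply ContinuousOn.intervalIntegrable
    rwa [Set.uIcc_of_le (by norm_num : (0:ℝ) ≤ 1)]
  have hqne : q ≠ 0 := hq0.ne'
  have hGderiv : ∀ x ∈ Set.Ioo (0:ℝ) 1, HasDerivAt G ((thetaP α μ x)^2) x := by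
    intro x hx
    have hx0 : 0 < x := hx.1
    have ht0 : 0 < x ^ (q/2) := Real.rpow_pos_of_pos hx0 _
    have hrp : HasDerivAt (fun y : ℝ => y ^ (q/2)) (q/2 * x ^ (q/2 - 1)) x :=
      Real.hasDerivAt_rpow_const (Or.inl hx0.ne')
    have hF := hasDerivAt_Fanti hν1 hr0 ht0
    have hcomp := (hF.comp x hrp).const_mul (2/q)
    have hG' : HasDerivAt G
        (2/q * (x ^ (q/2) * (besselJ ν (r * x^(q/2)))^2 * (q/2 * x ^ (q/2-1)))) x := by
      simpa [hGdef, Function.comp] using hcomp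
    convert hG' using 1
    rw [hthetaP x, mul_pow]
    have e1 : (x ^ ((1-α)/2))^2 = x ^ (1-α) := by
      rw [← Real.rpow_natCast (x ^ ((1-α)/2)) 2, ← Real.rpow_mul hx0.le]
      norm_num
    have e2 : x ^ (q/2) * x ^ (q/2 - 1) = x ^ (1-α) := by
      rw [← Real.rpow_add hx0]
      congr 1
      rw [hqdef]; ring
    rw [e1, show 2/q * (x ^ (q/2) * (besselJ ν (r * x^(q/2)))^2 * (q/2 * x ^ (q/2-1)))
      = (x ^ (q/2) * x ^ (q/2-1)) * (besselJ ν (r * x^(q/2)))^2 by field_simp, e2]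
  have hFTC := intervalIntegral.integral_eq_sub_of_hasDeriv_right_of_le
    (by norm_num : (0:ℝ) ≤ 1) hGcont
    (fun x hx => (hGderiv x hx).hasDerivWithinAt) hInt
  rw [hFTC]
  have hG0 : G 0 = 0 := by
    simp [hGdef, Fanti, Real.zero_rpow (ne_of_gt (by linarith : (0:ℝ) < q/2))]
  have hG1 : G 1 = 2/q * ((1:ℝ)/2 * ((besselJ ν r)^2 + (besselJ (ν+1) r)^2)
      - ν/r*(besselJ ν r * besselJ (ν+1) r)) := by
    simp [hGdef, Fanti, Real.one_rpow]
  rw [hG1, hG0]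
  have hrne : r ≠ 0 := hr0.ne'
  field_simp
  ring
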